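/- Let X be a Banach space, let T be a bounded linear operator on X which is J^mix-class, and let M be a closed T-invariant subspace of X such that M ⊆ A_T^mix and A_T^mix \ M ≠ ∅. Then the induced operator T̂ : X/M → X/M, defined by T̂[x] = [Tx] on the quotient Banach space X/M, is J^mix-class. -/
import Mathlib


open Filter Topology

/-- The extended mixing limit set `J_T^mix(x)`: all `y` for which there exists a
sequence `(x_n)` with `x_n → x` and `T^n x_n → y`. -/
noncomputable def Jmix {X : Type*} [SeminormedAddCommGroup X] [NormedSpace ℂ X]
    (T : X →L[ℂ] X) (x : X) : Set X :=
  {y | ∃ u : ℕ → X, Tendsto u atTop (𝓝 x) ∧ Tendsto (fun n => (T ^ n) (u n)) atTop (𝓝 y)}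

set_option synthInstance.maxHeartbeats 1000000 in
set_option maxHeartbeats 1000000 in
/-- Let `T` be `J^mix`-class and let `M` be a closed `T`-invariant subspace with
`M ⊆ A_T^mix` and `A_T^mix \ M ≠ ∅`. Then the induced operator `T̂` on the quotient
`X/M` (i.e. any bounded operator with `T̂ ∘ π = π ∘ T`, where `π : X → X/M` is the
quotient map) is `J^mix`-class. -/
theorem stmt13 {X : Type*} [NormedAddCommGroup X] [NormedSpace ℂ X] [CompleteSpace X]
    (T : X →L[ℂ] X) (hT : ∃ x : X, x ≠ 0 ∧ Jmix T x = Set.univ)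
    (M : Submodule ℂ X) (hMclosed : IsClosed (M : Set X))
    (hMinv : ∀ x ∈ M, T x ∈ M)
    (hMsub : (M : Set X) ⊆ {x : X | Jmix T x = Set.univ})
    (hMne : ({x : X | Jmix T x = Set.univ} \ (M : Set X)).Nonempty)
    (That : (X ⧸ M) →L[ℂ] (X ⧸ M))
    (hThat : ∀ x : X, That (M.mkQ x) = M.mkQ (T x)) :
    ∃ q : X ⧸ M, q ≠ 0 ∧ Jmix That q = Set.univ := by
  obtain ⟨x, hxJ, hxM⟩ := hMne
  have hpow : ∀ (n : ℕ) (z : X), (That ^ n) (M.mkQ z) = M.mkQ ((T ^ n) z) := by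
    intro n
    induction n with
    | zero => intro z; simp
    | succ n ih =>
      intro z
      rw [pow_succ, pow_succ]
      simp only [ContinuousLinearMap.mul_apply]
      rw [hThat, ih]
  have hcont : Continuous (M.mkQ) := continuous_quot_mk
  refine ⟨M.mkQ x, ?_, ?_⟩
  · simpa [Submodule.Quotient.mk_eq_zero] using hxM
  · ext q
    simp only [Set.mem_univ, iff_true]
    obtain ⟨y, rfl⟩ := Submodule.Quotient.mk_surjective M q
    have : y ∈ Jmix T x := by rw [hxJ]; trivial
    obtain ⟨u, hu1, hu2⟩ := this
    refine ⟨fun n => M.mkQ (u n), ?_, ?_⟩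
    · exact (hcont.tendsto x).comp hu1
    · exact (((hcont.tendsto y).comp hu2).congr (fun n => (hpow n (u n)).symm))
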